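/- Let X be a square-integrable random vector with values in EuclideanSpace ℝ (Fin n), with mean vector μ = E[X] and covariance matrix C defined by C i j = E[(X i − μ i)·(X j − μ j)]. If W is any subspace of EuclideanSpace ℝ (Fin n) such that X − μ ∈ W almost surely, then the range of C (as a linear map) is contained in W. Consequently, the range of C is the smallest subspace containing X − μ almost surely. -/

import Mathlib

open MeasureTheory
open scoped RealInnerProductSpace

private lemma memL2_mul_integrable {Ω : Type*} [MeasurableSpace Ω] {P : Measure Ω} {f g : Ω → ℝ}
    (hf : MemLp f 2 P) (hg : MemLp g 2 P) : Integrable (fun ω => f ω * g ω) P := by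
  rw [← memLp_one_iff_integrable]
  have h := hf.smul (φ := g) hg (r := 1)
  simpa [smul_eq_mul, mul_comm, Pi.mul_def] using h

theorem range_covariance_isLeast
    {Ω : Type*} [MeasurableSpace Ω] {n : ℕ}
    (P : Measure Ω) [IsProbabilityMeasure P]
    (X : Ω → EuclideanSpace ℝ (Fin n)) (hXm : Measurable X)
    (hX2 : ∀ i, MemLp (fun ω => X ω i) 2 P)
    (μ : EuclideanSpace ℝ (Fin n)) (hμ : ∀ i, μ i = ∫ ω, X ω i ∂P)
    (C : Matrix (Fin n) (Fin n) ℝ)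
    (hC : ∀ i j, C i j = ∫ ω, (X ω i - μ i) * (X ω j - μ j) ∂P) :
    (∀ W : Submodule ℝ (EuclideanSpace ℝ (Fin n)),
        (∀ᵐ ω ∂P, X ω - μ ∈ W) → LinearMap.range (Matrix.toEuclideanLin C) ≤ W) ∧
      IsLeast {W : Submodule ℝ (EuclideanSpace ℝ (Fin n)) | ∀ᵐ ω ∂P, X ω - μ ∈ W}
        (LinearMap.range (Matrix.toEuclideanLin C)) := by
  have hf2 : ∀ i, MemLp (fun ω => X ω i - μ i) 2 P := fun i => (hX2 i).sub (memLp_const (μ i))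
  have hmul : ∀ i j, Integrable (fun ω => (X ω i - μ i) * (X ω j - μ j)) P :=
    fun i j => memL2_mul_integrable (hf2 i) (hf2 j)
  have hY2 : ∀ v : EuclideanSpace ℝ (Fin n),
      MemLp (fun ω => ∑ i, v i * (X ω i - μ i)) 2 P := by
    intro v
    have := memLp_finset_sum' (μ := P) (p := 2) Finset.univ
      (f := fun i ω => v i * (X ω i - μ i)) (fun i _ => (hf2 i).const_mul (v i))
    convert this using 1
    funext ω
    simp
  have hYint : ∀ v w : EuclideanSpace ℝ (Fin n),
      Integrable (fun ω => (∑ i, w i * (X ω i - μ i)) * (∑ j, v j * (X ω j - μ j))) P :=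
    fun v w => memL2_mul_integrable (hY2 w) (hY2 v)
  have key : ∀ v w : EuclideanSpace ℝ (Fin n),
      ⟪w, Matrix.toEuclideanLin C v⟫ =
        ∫ ω, (∑ i, w i * (X ω i - μ i)) * (∑ j, v j * (X ω j - μ j)) ∂P := by
    intro v w
    have h1 : (fun ω => (∑ i, w i * (X ω i - μ i)) * (∑ j, v j * (X ω j - μ j))) =
        fun ω => ∑ i, ∑ j, (w i * v j) * ((X ω i - μ i) * (X ω j - μ j)) := by
      funext ω
      rw [Finset.sum_mul_sum]
      exact Finset.sum_congr rfl fun i _ => Finset.sum_congr rfl fun j _ => by ring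
    rw [h1, integral_finset_sum _ (fun i _ =>
      integrable_finset_sum _ (fun j _ => (hmul i j).const_mul _))]
    have h2 : ∀ i, (∫ ω, ∑ j, (w i * v j) * ((X ω i - μ i) * (X ω j - μ j)) ∂P) =
        ∑ j, (w i * v j) * C i j := by
      intro i
      rw [integral_finset_sum _ (fun j _ => (hmul i j).const_mul _)]
      exact Finset.sum_congr rfl fun j _ => by rw [integral_const_mul, hC i j]
    simp_rw [h2]
    simp [Matrix.toEuclideanLin_apply, PiLp.inner_apply, Matrix.mulVec, dotProduct,
      Finset.mul_sum]
    exact Finset.sum_congr rfl fun i _ => by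
      rw [Finset.sum_mul]; exact Finset.sum_congr rfl fun j _ => by ring
  -- Part A: lower bound
  have hA : ∀ W : Submodule ℝ (EuclideanSpace ℝ (Fin n)),
      (∀ᵐ ω ∂P, X ω - μ ∈ W) → LinearMap.range (Matrix.toEuclideanLin C) ≤ W := by
    intro W hW
    rintro x ⟨v, rfl⟩
    rw [← Submodule.orthogonal_orthogonal W]
    refine (Submodule.mem_orthogonal _ _).mpr fun w hw => ?_
    rw [key v w]
    rw [integral_eq_zero_of_ae ?_]
    filter_upwards [hW] with ω hmem
    have h0 : (∑ i, w i * (X ω i - μ i)) = 0 := by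
      have := (Submodule.mem_orthogonal W w).1 hw _ hmem
      simpa [PiLp.inner_apply, mul_comm] using this
    simp [h0]
  -- Part B: membership
  set R := LinearMap.range (Matrix.toEuclideanLin C) with hR
  have hzero : ∀ u : EuclideanSpace ℝ (Fin n), u ∈ Rᗮ →
      ∀ᵐ ω ∂P, ∑ i, u i * (X ω i - μ i) = 0 := by
    intro u hu
    have h0 : ∫ ω, (∑ i, u i * (X ω i - μ i)) * (∑ j, u j * (X ω j - μ j)) ∂P = 0 := by
      rw [← key u u, real_inner_comm]
      exact (Submodule.mem_orthogonal R u).1 hu _ ⟨u, rfl⟩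
    have h1 := (integral_eq_zero_iff_of_nonneg_ae
      (Filter.Eventually.of_forall fun ω => mul_self_nonneg _) (hYint u u)).1 h0
    filter_upwards [h1] with ω hω
    exact mul_self_eq_zero.1 hω
  have hmem : ∀ᵐ ω ∂P, X ω - μ ∈ R := by
    let b := Module.finBasis ℝ ↥Rᗮ
    have hall : ∀ᵐ ω ∂P, ∀ k, ∑ i, ((b k : EuclideanSpace ℝ (Fin n))) i * (X ω i - μ i) = 0 :=
      ae_all_iff.2 fun k => hzero _ (b k).2
    filter_upwards [hall] with ω hω
    rw [← Submodule.orthogonal_orthogonal R]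
    refine (Submodule.mem_orthogonal _ _).mpr fun u hu => ?_
    have hrep : (u : EuclideanSpace ℝ (Fin n)) =
        ∑ k, (b.repr ⟨u, hu⟩ k) • ((b k : ↥Rᗮ) : EuclideanSpace ℝ (Fin n)) := by
      have := congrArg (Subtype.val) (b.sum_repr ⟨u, hu⟩)
      simp only [Submodule.coe_sum, Submodule.coe_smul] at this
      exact this.symm
    rw [hrep]
    rw [sum_inner]
    refine Finset.sum_eq_zero fun k _ => ?_
    rw [real_inner_smul_left]
    have : ⟪((b k : ↥Rᗮ) : EuclideanSpace ℝ (Fin n)), X ω - μ⟫ = 0 := by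
      have h := hω k
      simpa [PiLp.inner_apply, mul_comm] using h
    rw [this, mul_zero]
  exact ⟨hA, ⟨hmem, fun W hW => hA W hW⟩⟩
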